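/- arXiv:2505.03984 — 2 statements merged into one kernel-verified Lean document; each statement's English description precedes it below -/
import Mathlib

section
/- Let F be three times differentiable on an open interval J with F > 0 and F' ≠ 0 on J, and let h = √F. Then on J, 3·(h'')² - h'·h''' = ((F')⁴ / (8·F²)) · (F/(F')²)'', where (F/(F')²)'' denotes the second derivative of the function u ↦ F(u)/(F'(u))². -/
theorem stmt_8 (a b : ℝ) (F : ℝ → ℝ)
    (hF : ContDiffOn ℝ 3 F (Set.Ioo a b))
    (hFpos : ∀ u ∈ Set.Ioo a b, 0 < F u)
    (hF' : ∀ u ∈ Set.Ioo a b, deriv F u ≠ 0)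
    (h : ℝ → ℝ) (hh : ∀ u ∈ Set.Ioo a b, h u = Real.sqrt (F u)) :
    ∀ u ∈ Set.Ioo a b,
      3 * (deriv (deriv h) u)^2 - deriv h u * deriv (deriv (deriv h)) u =
        ((deriv F u)^4 / (8 * (F u)^2)) *
          deriv (deriv (fun v => F v / (deriv F v)^2)) u := by
  intro u hu
  have hop : IsOpen (Set.Ioo a b) := isOpen_Ioo
  have hF1 : ContDiffOn ℝ 2 (deriv F) (Set.Ioo a b) :=
    hF.deriv_of_isOpen hop (by norm_num)
  have hF2 : ContDiffOn ℝ 1 (deriv (deriv F)) (Set.Ioo a b) :=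
    hF1.deriv_of_isOpen hop (by norm_num)
  have hdF : ∀ v ∈ Set.Ioo a b, HasDerivAt F (deriv F v) v := fun v hv =>
    ((hF.differentiableOn (by norm_num)).differentiableAt (hop.mem_nhds hv)).hasDerivAt
  have hdF1 : ∀ v ∈ Set.Ioo a b, HasDerivAt (deriv F) (deriv (deriv F) v) v := fun v hv =>
    ((hF1.differentiableOn (by norm_num)).differentiableAt (hop.mem_nhds hv)).hasDerivAt
  have hdF2 : ∀ v ∈ Set.Ioo a b, HasDerivAt (deriv (deriv F)) (deriv (deriv (deriv F)) v) v :=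
    fun v hv =>
    ((hF2.differentiableOn (by norm_num)).differentiableAt (hop.mem_nhds hv)).hasDerivAt
  set s : ℝ → ℝ := fun v => Real.sqrt (F v) with hsdef
  have hspos : ∀ v ∈ Set.Ioo a b, 0 < s v := fun v hv => Real.sqrt_pos.2 (hFpos v hv)
  have hsne : ∀ v ∈ Set.Ioo a b, s v ≠ 0 := fun v hv => (hspos v hv).ne'
  have hssq : ∀ v ∈ Set.Ioo a b, s v ^ 2 = F v := fun v hv =>
    Real.sq_sqrt (hFpos v hv).le
  -- first derivative of h
  set g1 : ℝ → ℝ := fun v => deriv F v / (2 * s v) with hg1def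
  have hdh1 : ∀ v ∈ Set.Ioo a b, HasDerivAt h (g1 v) v := by
    intro v hv
    have : HasDerivAt s (deriv F v / (2 * s v)) v := (hdF v hv).sqrt (hFpos v hv).ne'
    exact this.congr_of_eventuallyEq
      (Filter.eventuallyEq_of_mem (hop.mem_nhds hv) hh)
  have hderivh : ∀ v ∈ Set.Ioo a b, deriv h v = g1 v := fun v hv => (hdh1 v hv).deriv
  -- second derivative of h
  set g2 : ℝ → ℝ := fun v =>
    (deriv (deriv F) v * (2 * s v) - deriv F v * (2 * (deriv F v / (2 * s v)))) / (2 * s v) ^ 2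
    with hg2def
  have hdg1 : ∀ v ∈ Set.Ioo a b, HasDerivAt g1 (g2 v) v := by
    intro v hv
    have hden : HasDerivAt (fun w => 2 * s w) (2 * (deriv F v / (2 * s v))) v :=
      ((hdF v hv).sqrt (hFpos v hv).ne').const_mul 2
    exact (hdF1 v hv).div hden (mul_ne_zero two_ne_zero (hsne v hv))
  have hdh2 : ∀ v ∈ Set.Ioo a b, HasDerivAt (deriv h) (g2 v) v := fun v hv =>
    (hdg1 v hv).congr_of_eventuallyEq
      (Filter.eventuallyEq_of_mem (hop.mem_nhds hv) hderivh)
  have hderivh2 : ∀ v ∈ Set.Ioo a b, deriv (deriv h) v = g2 v := fun v hv => (hdh2 v hv).deriv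
  -- third derivative of h (only at u)
  have hdenu : HasDerivAt (fun w => 2 * s w) (2 * (deriv F u / (2 * s u))) u :=
    ((hdF u hu).sqrt (hFpos u hu).ne').const_mul 2
  have hne2u : (2 : ℝ) * s u ≠ 0 := mul_ne_zero two_ne_zero (hsne u hu)
  have hdg2 := (((hdF2 u hu).mul hdenu).sub
      ((hdF1 u hu).mul ((hdg1 u hu).const_mul 2))).div (hdenu.pow 2)
      (pow_ne_zero 2 hne2u)
  have hdh3 : HasDerivAt g2 _ u := hdg2
  have hd3 := (hdh3.congr_of_eventuallyEq
      (Filter.eventuallyEq_of_mem (hop.mem_nhds hu) hderivh2)).deriv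
  -- derivatives of G = F / F'^2
  set G1 : ℝ → ℝ := fun v =>
    (deriv F v * deriv F v ^ 2 - F v * ((2:ℕ) * deriv F v ^ (2-1) * deriv (deriv F) v)) /
      (deriv F v ^ 2) ^ 2 with hG1def
  have hdG : ∀ v ∈ Set.Ioo a b, HasDerivAt (fun w => F w / (deriv F w)^2) (G1 v) v := by
    intro v hv
    exact (hdF v hv).div ((hdF1 v hv).pow 2) (pow_ne_zero 2 (hF' v hv))
  have hderivG : ∀ v ∈ Set.Ioo a b, deriv (fun w => F w / (deriv F w)^2) v = G1 v :=
    fun v hv => (hdG v hv).deriv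
  have hdG1 := (((hdF1 u hu).mul ((hdF1 u hu).pow 2)).sub
      ((hdF u hu).mul ((((hdF1 u hu).pow (2-1)).const_mul ((2:ℕ):ℝ)).mul (hdF2 u hu)))).div
      (((hdF1 u hu).pow 2).pow 2) (pow_ne_zero 2 (pow_ne_zero 2 (hF' u hu)))
  have hdG1' : HasDerivAt G1 _ u := hdG1
  have hd2G := (hdG1'.congr_of_eventuallyEq
      (Filter.eventuallyEq_of_mem (hop.mem_nhds hu) hderivG)).deriv
  -- assemble
  rw [hderivh u hu, hderivh2 u hu, hd3, hd2G]
  simp only [hg1def, hg2def, Pi.mul_apply, Pi.pow_apply, Pi.sub_apply, Pi.div_apply]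
  rw [← hssq u hu]
  have h1 := hF' u hu
  have h2 := hsne u hu
  field_simp
  ring
end

section
/- Let r, K, p > 0 with p ≥ 1 and d > 0, and let F(u) = (r/d)·(u²/2 - u^{p+2}/((p+2)·K^p)) be the potential of the Richards reaction term. Then the function u ↦ F(u)/(F'(u))² is convex on (0, K), i.e., its second derivative is nonnegative there (condition C2⁺ holds). -/
open Topology

noncomputable def Q0 (r K p d : ℝ) : ℝ → ℝ := fun u =>
  d / r * ((p + 2) - 2 * (u / K) ^ p) / (2 * (p + 2) * (1 - (u / K) ^ p) ^ 2)

noncomputable def Q1 (r K p d : ℝ) : ℝ → ℝ := fun u =>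
  d / r * ((p + 1 - (u / K) ^ p) * (p * (u / K) ^ (p - 1) * (1 / K))) /
    ((p + 2) * (1 - (u / K) ^ p) ^ 3)

noncomputable def Q2 (r K p d : ℝ) : ℝ → ℝ := fun u =>
  d / r *
    ((3 * p + 2 - 2 * (u / K) ^ p) * (p * (u / K) ^ (p - 1) * (1 / K)) ^ 2 /
        ((p + 2) * (1 - (u / K) ^ p) ^ 4) +
      (p + 1 - (u / K) ^ p) * (p * ((p - 1) * (u / K) ^ (p - 2) * (1 / K)) * (1 / K)) /
        ((p + 2) * (1 - (u / K) ^ p) ^ 3))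

section aux

variable {r K p d : ℝ}

lemma t_facts (hK : 0 < K) (hp : 1 ≤ p) {u : ℝ} (hu : u ∈ Set.Ioo 0 K) :
    0 < (u / K) ^ p ∧ (u / K) ^ p < 1 := by
  have hx : 0 < u / K := div_pos hu.1 hK
  have hx1 : u / K < 1 := (div_lt_one hK).2 hu.2
  exact ⟨Real.rpow_pos_of_pos hx p, Real.rpow_lt_one hx.le hx1 (lt_of_lt_of_le one_pos hp)⟩

lemma hasDerivAt_t (hK : 0 < K) {u : ℝ} (hu : u ∈ Set.Ioo 0 K) (q : ℝ) :
    HasDerivAt (fun v => (v / K) ^ q) (q * (u / K) ^ (q - 1) * (1 / K)) u := by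
  have hx : 0 < u / K := div_pos hu.1 hK
  have h1 : HasDerivAt (fun v : ℝ => v / K) (1 / K) u := by
    simpa using (hasDerivAt_id u).div_const K
  have h2 : HasDerivAt (fun x : ℝ => x ^ q) (q * (u / K) ^ (q - 1)) (u / K) :=
    Real.hasDerivAt_rpow_const (Or.inl hx.ne')
  simpa [Function.comp_def] using h2.comp u h1

lemma hasDerivAt_Q0 (hr : 0 < r) (hK : 0 < K) (hp : 1 ≤ p) (hd : 0 < d)
    {u : ℝ} (hu : u ∈ Set.Ioo 0 K) : HasDerivAt (Q0 r K p d) (Q1 r K p d u) u := by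
  obtain ⟨ht0, ht1⟩ := t_facts hK hp hu
  have h1t : (0:ℝ) < 1 - (u / K) ^ p := by linarith
  have hp2 : (0:ℝ) < p + 2 := by linarith
  have ht := hasDerivAt_t hK hu p
  have hnum : HasDerivAt (fun v => d / r * ((p + 2) - 2 * (v / K) ^ p))
      (d / r * -(2 * (p * (u / K) ^ (p - 1) * (1 / K)))) u :=
    ((ht.const_mul 2).const_sub (p + 2)).const_mul (d / r)
  have hden : HasDerivAt (fun v => 2 * (p + 2) * (1 - (v / K) ^ p) ^ 2)
      (2 * (p + 2) * ((2:ℕ) * (1 - (u / K) ^ p) ^ (2 - 1) *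
        -(p * (u / K) ^ (p - 1) * (1 / K)))) u :=
    ((ht.const_sub 1).pow 2).const_mul (2 * (p + 2))
  have hdne : 2 * (p + 2) * (1 - (u / K) ^ p) ^ 2 ≠ 0 := by positivity
  have h := hnum.div hden hdne
  convert h using 1
  · rfl
  · rfl
  · rfl
  simp only [Q1]
  field_simp
  ring

lemma hasDerivAt_Q1 (hr : 0 < r) (hK : 0 < K) (hp : 1 ≤ p) (hd : 0 < d)
    {u : ℝ} (hu : u ∈ Set.Ioo 0 K) : HasDerivAt (Q1 r K p d) (Q2 r K p d u) u := by
  obtain ⟨ht0, ht1⟩ := t_facts hK hp hu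
  have h1t : (0:ℝ) < 1 - (u / K) ^ p := by linarith
  have hp2 : (0:ℝ) < p + 2 := by linarith
  have ht := hasDerivAt_t hK hu p
  have hs := hasDerivAt_t hK hu (p - 1)
  have hs' : HasDerivAt (fun v => (v / K) ^ (p - 1))
      ((p - 1) * (u / K) ^ (p - 2) * (1 / K)) u := by
    have : p - 1 - 1 = p - 2 := by ring
    rwa [this] at hs
  have hA : HasDerivAt (fun v => p + 1 - (v / K) ^ p)
      (-(p * (u / K) ^ (p - 1) * (1 / K))) u := ht.const_sub (p + 1)
  have hB : HasDerivAt (fun v => p * (v / K) ^ (p - 1) * (1 / K))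
      (p * ((p - 1) * (u / K) ^ (p - 2) * (1 / K)) * (1 / K)) u :=
    (hs'.const_mul p).mul_const (1 / K)
  have hnum : HasDerivAt
      (fun v => d / r * ((p + 1 - (v / K) ^ p) * (p * (v / K) ^ (p - 1) * (1 / K))))
      (d / r * (-(p * (u / K) ^ (p - 1) * (1 / K)) * (p * (u / K) ^ (p - 1) * (1 / K)) +
        (p + 1 - (u / K) ^ p) * (p * ((p - 1) * (u / K) ^ (p - 2) * (1 / K)) * (1 / K)))) u :=
    (hA.mul hB).const_mul (d / r)
  have hden : HasDerivAt (fun v => (p + 2) * (1 - (v / K) ^ p) ^ 3)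
      ((p + 2) * ((3:ℕ) * (1 - (u / K) ^ p) ^ (3 - 1) *
        -(p * (u / K) ^ (p - 1) * (1 / K)))) u :=
    ((ht.const_sub 1).pow 3).const_mul (p + 2)
  have hdne : (p + 2) * (1 - (u / K) ^ p) ^ 3 ≠ 0 := by positivity
  have h := hnum.div hden hdne
  convert h using 1
  · rfl
  · rfl
  · rfl
  simp only [Q2]
  field_simp
  ring

lemma Q2_nonneg (hr : 0 < r) (hK : 0 < K) (hp : 1 ≤ p) (hd : 0 < d)
    {u : ℝ} (hu : u ∈ Set.Ioo 0 K) : 0 ≤ Q2 r K p d u := by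
  obtain ⟨ht0, ht1⟩ := t_facts hK hp hu
  have h1t : (0:ℝ) < 1 - (u / K) ^ p := by linarith
  have hp2 : (0:ℝ) < p + 2 := by linarith
  have hx : 0 < u / K := div_pos hu.1 hK
  have hs1 : (0:ℝ) ≤ (u / K) ^ (p - 1) := (Real.rpow_pos_of_pos hx _).le
  have hs2 : (0:ℝ) ≤ (u / K) ^ (p - 2) := (Real.rpow_pos_of_pos hx _).le
  have hp1 : (0:ℝ) ≤ p - 1 := by linarith
  have c1 : (0:ℝ) ≤ 3 * p + 2 - 2 * (u / K) ^ p := by nlinarith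
  have c2 : (0:ℝ) ≤ p + 1 - (u / K) ^ p := by nlinarith
  have hK0 : (0:ℝ) ≤ 1 / K := by positivity
  apply mul_nonneg (by positivity)
  apply add_nonneg
  · apply div_nonneg (mul_nonneg c1 (by positivity)) (by positivity)
  · apply div_nonneg (mul_nonneg c2 ?_) (by positivity)
    have : (0:ℝ) ≤ (p - 1) * (u / K) ^ (p - 2) * (1 / K) := by
      exact mul_nonneg (mul_nonneg hp1 hs2) hK0
    positivity

lemma eq_Q0 (hr : 0 < r) (hK : 0 < K) (hp : 1 ≤ p) (hd : 0 < d)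
    {u : ℝ} (hu : u ∈ Set.Ioo 0 K) :
    (r / d) * (u ^ 2 / 2 - u ^ (p + 2) / ((p + 2) * K ^ p)) /
      (r * u * (1 - (u / K) ^ p) / d) ^ 2 = Q0 r K p d u := by
  obtain ⟨ht0, ht1⟩ := t_facts hK hp hu
  have h1t : (0:ℝ) < 1 - (u / K) ^ p := by linarith
  have hp2 : (0:ℝ) < p + 2 := by linarith
  have hKp : (0:ℝ) < K ^ p := Real.rpow_pos_of_pos hK p
  have hup : (0:ℝ) < u ^ p := Real.rpow_pos_of_pos hu.1 p
  have hdiv : (u / K) ^ p = u ^ p / K ^ p := Real.div_rpow hu.1.le hK.le p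
  have hsplit : u ^ (p + 2) = u ^ p * u ^ 2 := by
    rw [Real.rpow_add hu.1, Real.rpow_two]
  rw [hdiv] at h1t ⊢
  simp only [Q0, hdiv, hsplit]
  have h1t' : 1 - u ^ p / K ^ p ≠ 0 := h1t.ne'
  have hB : (r * u * (1 - u ^ p / K ^ p) / d) ^ 2 ≠ 0 :=
    pow_ne_zero _ (div_ne_zero (mul_ne_zero (mul_ne_zero hr.ne' hu.1.ne') h1t') hd.ne')
  have hD : 2 * (p + 2) * (1 - u ^ p / K ^ p) ^ 2 ≠ 0 :=
    mul_ne_zero (by positivity) (pow_ne_zero _ h1t')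
  rw [div_eq_div_iff hB hD]
  field_simp

end aux

theorem stmt_19 (r K p d : ℝ) (hr : 0 < r) (hK : 0 < K) (hp : 1 ≤ p) (hd : 0 < d)
    (f F : ℝ → ℝ)
    (hf : ∀ u, 0 ≤ u → f u = r * u * (1 - (u/K) ^ p))
    (hF : ∀ u, 0 ≤ u → F u = (r/d) * (u^2/2 - u ^ (p+2) / ((p+2) * K ^ p))) :
    ConvexOn ℝ (Set.Ioo 0 K) (fun u => F u / (f u / d)^2) ∧
    ∀ u ∈ Set.Ioo 0 K,
      0 ≤ deriv (deriv (fun v => F v / (f v / d)^2)) u := by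
  have heq : Set.EqOn (fun u => F u / (f u / d) ^ 2) (Q0 r K p d) (Set.Ioo 0 K) := by
    intro u hu
    simp only
    rw [hF u hu.1.le, hf u hu.1.le]
    exact eq_Q0 hr hK hp hd hu
  have hint : interior (Set.Ioo 0 K) = Set.Ioo 0 K := isOpen_Ioo.interior_eq
  constructor
  · refine (convexOn_of_hasDerivWithinAt2_nonneg (convex_Ioo 0 K)
      (fun u hu => (hasDerivAt_Q0 hr hK hp hd hu).continuousAt.continuousWithinAt)
      (f' := Q1 r K p d) (f'' := Q2 r K p d) ?_ ?_ ?_).congr heq.symm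
    · rw [hint]
      exact fun u hu => (hasDerivAt_Q0 hr hK hp hd hu).hasDerivWithinAt
    · rw [hint]
      exact fun u hu => (hasDerivAt_Q1 hr hK hp hd hu).hasDerivWithinAt
    · rw [hint]
      exact fun u hu => Q2_nonneg hr hK hp hd hu
  · intro u hu
    have hmem : Set.Ioo (0:ℝ) K ∈ 𝓝 u := isOpen_Ioo.mem_nhds hu
    have h1 : (fun v => F v / (f v / d) ^ 2) =ᶠ[𝓝 u] Q0 r K p d :=
      Filter.eventuallyEq_of_mem hmem heq
    have h3 : Set.EqOn (deriv (Q0 r K p d)) (Q1 r K p d) (Set.Ioo 0 K) :=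
      fun v hv => (hasDerivAt_Q0 hr hK hp hd hv).deriv
    have h4 : deriv (fun v => F v / (f v / d) ^ 2) =ᶠ[𝓝 u] Q1 r K p d :=
      h1.deriv.trans (Filter.eventuallyEq_of_mem hmem h3)
    rw [h4.deriv_eq, (hasDerivAt_Q1 hr hK hp hd hu).deriv]
    exact Q2_nonneg hr hK hp hd hu
end
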